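/- arXiv:2506.15597 — 4 statements merged into one kernel-verified Lean document; each statement's English description precedes it below -/
import Mathlib

section
/- The squared sigmoid loss t ↦ (σ(t) - 1/2)² has (1/8)-Lipschitz derivative on ℝ; that is, for all s, t ∈ ℝ, |g₂'(s) - g₂'(t)| ≤ (1/8)|s - t| where g₂(t) = (σ(t) - 1/2)². -/
noncomputable def sigmoid (t : ℝ) : ℝ := 1 / (1 + Real.exp (-t))

lemma one_add_exp_pos (t : ℝ) : 0 < 1 + Real.exp (-t) := by positivity

lemma sigmoid_pos (t : ℝ) : 0 < sigmoid t := by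
  unfold sigmoid; positivity

lemma sigmoid_lt_one (t : ℝ) : sigmoid t < 1 := by
  unfold sigmoid
  rw [div_lt_one (one_add_exp_pos t)]
  linarith [Real.exp_pos (-t)]

lemma hasDerivAt_sigmoid (t : ℝ) :
    HasDerivAt sigmoid (sigmoid t * (1 - sigmoid t)) t := by
  have h : HasDerivAt (fun t : ℝ => 1 + Real.exp (-t)) (-Real.exp (-t)) t := by
    simpa using (Real.hasDerivAt_exp (-t)).comp t ((hasDerivAt_neg t)) |>.const_add 1
  have hne : 1 + Real.exp (-t) ≠ 0 := (one_add_exp_pos t).ne'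
  have h2 := h.inv hne
  have heq : sigmoid = fun t : ℝ => (1 + Real.exp (-t))⁻¹ := funext fun x => one_div _
  have hval : sigmoid t * (1 - sigmoid t) = - -Real.exp (-t) / (1 + Real.exp (-t)) ^ 2 := by
    rw [sigmoid]
    field_simp
    ring
  rw [hval, heq]
  exact h2

lemma hasDerivAt_loss (t : ℝ) :
    HasDerivAt (fun t => (sigmoid t - 1 / 2) ^ 2)
      (2 * (sigmoid t - 1 / 2) * (sigmoid t * (1 - sigmoid t))) t := by
  have h := ((hasDerivAt_sigmoid t).sub_const (1/2)).fun_pow 2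
  refine h.congr_deriv ?_
  ring

lemma deriv_loss (t : ℝ) :
    deriv (fun t => (sigmoid t - 1 / 2) ^ 2) t
      = 2 * (sigmoid t - 1 / 2) * (sigmoid t * (1 - sigmoid t)) :=
  (hasDerivAt_loss t).deriv

lemma hasDerivAt_derivloss (t : ℝ) :
    HasDerivAt (fun t => 2 * (sigmoid t - 1 / 2) * (sigmoid t * (1 - sigmoid t)))
      (sigmoid t * (1 - sigmoid t) * (-6 * sigmoid t ^ 2 + 6 * sigmoid t - 1)) t := by
  have h := hasDerivAt_sigmoid t
  have h2 := ((h.sub_const (1/2)).const_mul 2).fun_mul (h.fun_mul (h.const_sub 1))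
  refine h2.congr_deriv ?_
  beta_reduce
  ring

/-- The squared sigmoid loss `t ↦ (σ(t) - 1/2)²` has `(1/8)`-Lipschitz derivative on `ℝ`. -/
theorem lipschitz_deriv_sigmoid_loss (s t : ℝ) :
    |deriv (fun t => (sigmoid t - 1 / 2) ^ 2) s -
        deriv (fun t => (sigmoid t - 1 / 2) ^ 2) t| ≤ (1 / 8) * |s - t| := by
  have key : ∀ x ∈ (Set.univ : Set ℝ),
      ‖deriv (fun t => 2 * (sigmoid t - 1 / 2) * (sigmoid t * (1 - sigmoid t))) x‖ ≤ 1/8 := by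
    intro x _
    rw [(hasDerivAt_derivloss x).deriv, Real.norm_eq_abs, abs_le]
    have h1 := sigmoid_pos x
    have h2 := sigmoid_lt_one x
    set u := sigmoid x * (1 - sigmoid x) with hu
    have hexp : sigmoid x * (1 - sigmoid x) * (-6 * sigmoid x ^ 2 + 6 * sigmoid x - 1)
        = 6 * u ^ 2 - u := by rw [hu]; ring
    have hu0 : 0 ≤ u := by rw [hu]; nlinarith
    have hu4 : u ≤ 1/4 := by rw [hu]; nlinarith [sq_nonneg (sigmoid x - 1/2)]
    rw [hexp]
    constructor <;> nlinarith [sq_nonneg (u - 1/12), mul_nonneg (by linarith : (0:ℝ) ≤ 1/4 - u) (by linarith : (0:ℝ) ≤ u + 1/12)]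
  have hdiff : ∀ x ∈ (Set.univ : Set ℝ),
      DifferentiableAt ℝ (fun t => 2 * (sigmoid t - 1 / 2) * (sigmoid t * (1 - sigmoid t))) x :=
    fun x _ => (hasDerivAt_derivloss x).differentiableAt
  have := Convex.norm_image_sub_le_of_norm_deriv_le hdiff key convex_univ
    (Set.mem_univ t) (Set.mem_univ s)
  simp only [Real.norm_eq_abs] at this
  rw [deriv_loss s, deriv_loss t]
  exact this
end

section
/- Let r(t) = max(0, t) and G = {(t, r(t)) : t ∈ ℝ}. For (u, l) ∈ ℝ² with u < 0 and (1 + √2)u + l ≤ 0, the point (u, 0) ∈ G is a closest point of G to (u, l): for all t ∈ ℝ, l² ≤ (t - u)² + (r(t) - l)². -/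
/-- Projection onto the graph of ReLU, case `u < 0`, `(1+√2)u + l ≤ 0`: the point `(u, 0)`
of the graph is a closest point to `(u, l)`. -/
theorem relu_proj_case_neg (u l : ℝ) (hu : u < 0)
    (h : (1 + Real.sqrt 2) * u + l ≤ 0) :
    ∀ t : ℝ, l ^ 2 ≤ (t - u) ^ 2 + (max 0 t - l) ^ 2 := by
  intro t
  rcases le_or_gt t 0 with ht | ht
  · rw [max_eq_left ht]
    nlinarith [sq_nonneg (t - u)]
  · rw [max_eq_right ht.le]
    have h2 : Real.sqrt 2 ^ 2 = 2 := Real.sq_sqrt (by norm_num)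
    have := mul_nonneg ht.le (neg_nonneg.mpr h)
    nlinarith [sq_nonneg (Real.sqrt 2 * t + u), h2, this, sq_nonneg t]
end

section
/- Let r(t) = max(0, t) and G = {(t, r(t)) : t ∈ ℝ}. For (u, l) ∈ ℝ² with u < 0 and (1 + √2)u + l > 0, the point ((u+l)/2, (u+l)/2) ∈ G is a closest point of G to (u, l): for all t ∈ ℝ, (u-l)²/2 ≤ (t - u)² + (r(t) - l)². -/
/-- Projection onto the graph of ReLU, case `u < 0`, `(1+√2)u + l > 0`: the point
`((u+l)/2, (u+l)/2)` of the graph is a closest point to `(u, l)`. -/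
theorem relu_proj_case_neg_diag (u l : ℝ) (hu : u < 0)
    (h : 0 < (1 + Real.sqrt 2) * u + l) :
    ∀ t : ℝ, (u - l) ^ 2 / 2 ≤ (t - u) ^ 2 + (max 0 t - l) ^ 2 := by
  intro t
  have hs : Real.sqrt 2 ^ 2 = 2 := Real.sq_sqrt (by norm_num)
  have hs0 : 0 ≤ Real.sqrt 2 := Real.sqrt_nonneg 2
  rcases le_total t 0 with ht | ht
  · rw [max_eq_left ht]
    have h2 : 0 < l + u - Real.sqrt 2 * u := by nlinarith [mul_nonneg hs0 (neg_nonneg.2 hu.le)]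
    have h3 : 2 * u ^ 2 < (l + u) ^ 2 := by nlinarith [mul_pos h h2]
    nlinarith [sq_nonneg (t - u)]
  · rw [max_eq_right ht]
    nlinarith [sq_nonneg (2 * t - u - l)]
end

section
/- Let ρ < 0, L > 0, and ‖A‖ > 0 satisfy 8ρ²‖A‖² < 1 and 2|ρ| < 1/(√2 L). Choose ε with 0 < ε < min((1 - 8‖A‖²ρ²)/(4‖A‖²|ρ|), 1/(√2 L) - 2|ρ|), and set γ_y = 2|ρ| + ε, γ_x = 1/(2 γ_y ‖A‖²). Then the step sizes satisfy: 2|ρ| < γ_y ≤ 1/(√2 L), and |ρ| - γ_x + γ_y γ_x² ‖A‖² < 0 (equivalently, γ_x lies strictly between the two roots (1 ∓ √Δ)/(2γ_y‖A‖²) with Δ = 1 - 4|ρ|γ_y‖A‖² > 0). -/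
/-- Feasibility of the NC-SPDHG step-size selection in the case `α = 0`. -/
theorem ncspdhg_stepsize_feasibility (ρ L nA ε : ℝ)
    (hρ : ρ < 0) (hL : 0 < L) (hA : 0 < nA)
    (h1 : 8 * ρ ^ 2 * nA ^ 2 < 1)
    (h2 : 2 * |ρ| < 1 / (Real.sqrt 2 * L))
    (hε0 : 0 < ε)
    (hε : ε < min ((1 - 8 * nA ^ 2 * ρ ^ 2) / (4 * nA ^ 2 * |ρ|))
      (1 / (Real.sqrt 2 * L) - 2 * |ρ|)) :
    let γy := 2 * |ρ| + ε
    let γx := 1 / (2 * γy * nA ^ 2)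
    2 * |ρ| < γy ∧ γy ≤ 1 / (Real.sqrt 2 * L) ∧
      |ρ| - γx + γy * γx ^ 2 * nA ^ 2 < 0 := by
  intro γy γx
  have hr : 0 < |ρ| := abs_pos.mpr hρ.ne
  have habs : |ρ| = -ρ := abs_of_neg hρ
  obtain ⟨hε1, hε2⟩ := lt_min_iff.mp hε
  have hγy : 0 < γy := by positivity
  have key : ε * (4 * nA ^ 2 * |ρ|) < 1 - 8 * nA ^ 2 * ρ ^ 2 :=
    (lt_div_iff₀ (by positivity)).mp hε1
  have hk : 4 * |ρ| * nA ^ 2 * γy < 1 := by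
    have : ρ ^ 2 = |ρ| ^ 2 := (sq_abs ρ).symm
    show 4 * |ρ| * nA ^ 2 * (2 * |ρ| + ε) < 1
    nlinarith
  refine ⟨by simp only [γy]; linarith, by simp only [γy]; linarith, ?_⟩
  have hgx : γy * γx ^ 2 * nA ^ 2 = γx / 2 := by
    show γy * (1 / (2 * γy * nA ^ 2)) ^ 2 * nA ^ 2 = (1 / (2 * γy * nA ^ 2)) / 2
    field_simp
  rw [hgx]
  have : 2 * |ρ| < γx := by
    show 2 * |ρ| < 1 / (2 * γy * nA ^ 2)
    rw [lt_div_iff₀ (by positivity)]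
    nlinarith
  linarith
end
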